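/- Assume V⁺ admits a monomial parametrization with exponent matrix A (data p, A, K, ψ) and that the cone generator matrix E has no zero row. Suppose there exist nonzero vectors μ ∈ rs(A) and z ∈ im(S) with sign(μ) = sign(z). For any choice of positive numbers ā_i (for indices i with z_i = 0), define a ∈ ℝ^n by a_i = z_i/(e^{μ_i} − 1) if z_i ≠ 0 and a_i = ā_i if z_i = 0; set b = a⋆e^μ (exponential componentwise); and for any λ ∈ Λ(E) set k_j = (Eλ)_j/φ(a)_j for j = 1,…,r. Then a, b ∈ ℝ_{>0}^n with a ≠ b, k ∈ ℝ_{>0}^r, (k,a) ∈ V⁺, (k,b) ∈ V⁺, and b − a = z ∈ im(S) (equivalently Z(b − a) = 0); in particular the network admits multistationarity. -/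

import Mathlib

open Matrix

noncomputable section

/-- The monomial map φ: `phi Y x j = ∏ i, x i ^ Y i j`. -/
def phi {n r : ℕ} (Y : Matrix (Fin n) (Fin r) ℕ) (x : Fin n → ℝ) : Fin r → ℝ :=
  fun j => ∏ i, x i ^ Y i j

/-- The positive steady state variety V⁺. -/
def Vplus {n r : ℕ} (Y : Matrix (Fin n) (Fin r) ℕ) (S : Matrix (Fin n) (Fin r) ℝ) :
    Set ((Fin r → ℝ) × (Fin n → ℝ)) :=
  {p | (∀ j, 0 < p.1 j) ∧ (∀ i, 0 < p.2 i) ∧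
    S.mulVec (fun j => p.1 j * phi Y p.2 j) = 0}

/-- `E` is a cone generator matrix for `S`:
`E` is nonnegative and `ker S ∩ ℝ_{≥0}^r = {Eλ : λ ≥ 0}`. -/
def IsConeGenMatrix {n r d : ℕ} (S : Matrix (Fin n) (Fin r) ℝ)
    (E : Matrix (Fin r) (Fin d) ℝ) : Prop :=
  (∀ j l, 0 ≤ E j l) ∧
  {v : Fin r → ℝ | S.mulVec v = 0 ∧ ∀ j, 0 ≤ v j} =
    {v : Fin r → ℝ | ∃ lam : Fin d → ℝ, (∀ l, 0 ≤ lam l) ∧ v = E.mulVec lam}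

/-- The coefficient cone Λ(E). -/
def Lambda {r d : ℕ} (E : Matrix (Fin r) (Fin d) ℝ) : Set (Fin d → ℝ) :=
  {lam | (∀ l, 0 ≤ lam l) ∧ ∀ j, 0 < E.mulVec lam j}

/-- `ξ^B`: for a rational `q × m` matrix `B`, `(ξ^B) j = ∏ i, ξ i ^ (B i j)` (real powers). -/
def vecPow {q m : ℕ} (ξ : Fin q → ℝ) (B : Matrix (Fin q) (Fin m) ℚ) : Fin m → ℝ :=
  fun j => ∏ i, ξ i ^ ((B i j : ℝ))

/-- V⁺ admits a monomial parametrization with exponent matrix `A` (data `p`, `A`, `K`, `ψ`). -/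
def IsMonomialParamExp {n r : ℕ} (Y : Matrix (Fin n) (Fin r) ℕ)
    (S : Matrix (Fin n) (Fin r) ℝ) (p : ℕ) (A : Matrix (Fin (n - p)) (Fin n) ℚ)
    (K : Set (Fin r → ℝ)) (ψ : (Fin r → ℝ) → (Fin n → ℝ)) : Prop :=
  p < n ∧ A.rank = n - p ∧ (∀ k ∈ K, ∀ j, 0 < k j) ∧ (∀ k ∈ K, ∀ i, 0 < ψ k i) ∧
  ∀ k x, (∀ j : Fin r, 0 < k j) → (∀ i : Fin n, 0 < x i) →
    ((k, x) ∈ Vplus Y S ↔ k ∈ K ∧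
      ∃ ξ : Fin (n - p) → ℝ, (∀ l, 0 < ξ l) ∧ x = fun i => ψ k i * vecPow ξ A i)

/-- `Z` is a conservation matrix for `S` (with `s = rank S`):
its rows form a basis of the left kernel of `S`. -/
def IsConservationMatrix {n r : ℕ} (S : Matrix (Fin n) (Fin r) ℝ) (s : ℕ)
    (Z : Matrix (Fin (n - s)) (Fin n) ℝ) : Prop :=
  S.rank = s ∧ s < n ∧ LinearIndependent ℝ (fun i => Z i) ∧
    Submodule.span ℝ (Set.range (fun i => Z i)) = LinearMap.ker S.vecMulLinear

/-- `im₊(Z) = {Zx : x ≥ 0}`. -/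
def imPos {m n : ℕ} (Z : Matrix (Fin m) (Fin n) ℝ) : Set (Fin m → ℝ) :=
  {c | ∃ x : Fin n → ℝ, (∀ i, 0 ≤ x i) ∧ c = Z.mulVec x}

/-- The real row space of a rational matrix. -/
def rowSpace {q m : ℕ} (A : Matrix (Fin q) (Fin m) ℚ) : Submodule ℝ (Fin m → ℝ) :=
  Submodule.span ℝ (Set.range (fun l => fun i => ((A l i : ℝ))))

/-- The column space (image) of `S`. -/
def colSpace {n r : ℕ} (S : Matrix (Fin n) (Fin r) ℝ) : Submodule ℝ (Fin n → ℝ) :=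
  LinearMap.range S.mulVecLin

/-- Componentwise sign of a vector. -/
def signVec {m : ℕ} (v : Fin m → ℝ) : Fin m → ℝ := fun i => Real.sign (v i)

/-- from a pair μ ∈ rs(A), z ∈ im(S) with equal sign patterns one constructs
rate constants k and two distinct positive steady states a, b with b − a = z;
in particular the network admits multistationarity. -/
theorem multistationarity_of_sign_pattern {n r d s p : ℕ} (hn : 1 ≤ n) (hr : 1 ≤ r)
    (Y : Matrix (Fin n) (Fin r) ℕ) (S : Matrix (Fin n) (Fin r) ℝ)
    (A : Matrix (Fin (n - p)) (Fin n) ℚ) (K : Set (Fin r → ℝ))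
    (ψ : (Fin r → ℝ) → (Fin n → ℝ)) (hparam : IsMonomialParamExp Y S p A K ψ)
    (E : Matrix (Fin r) (Fin d) ℝ) (hE : IsConeGenMatrix S E)
    (hrow : ∀ j, ∃ l, E j l ≠ 0)
    (Z : Matrix (Fin (n - s)) (Fin n) ℝ) (hZ : IsConservationMatrix S s Z)
    (μ z : Fin n → ℝ) (hμ : μ ∈ rowSpace A) (hz : z ∈ colSpace S)
    (hμ0 : μ ≠ 0) (hz0 : z ≠ 0)
    (hsign : ∀ i, Real.sign (μ i) = Real.sign (z i))
    (abar : Fin n → ℝ) (habar : ∀ i, z i = 0 → 0 < abar i)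
    (a b : Fin n → ℝ)
    (ha : a = fun i => if z i = 0 then abar i else z i / (Real.exp (μ i) - 1))
    (hb : b = fun i => a i * Real.exp (μ i))
    (lam : Fin d → ℝ) (hlam : lam ∈ Lambda E)
    (k : Fin r → ℝ) (hk : k = fun j => E.mulVec lam j / phi Y a j) :
    (∀ i, 0 < a i) ∧ (∀ i, 0 < b i) ∧ a ≠ b ∧ (∀ j, 0 < k j) ∧
    (k, a) ∈ Vplus Y S ∧ (k, b) ∈ Vplus Y S ∧
    b - a = z ∧ (b - a) ∈ colSpace S ∧ Z.mulVec (b - a) = 0 ∧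
    (∃ k' : Fin r → ℝ, (∀ j, 0 < k' j) ∧ ∃ a' b' : Fin n → ℝ, a' ≠ b' ∧
      (k', a') ∈ Vplus Y S ∧ (k', b') ∈ Vplus Y S ∧
      Z.mulVec a' = Z.mulVec b') := by
  obtain ⟨hEpos, hEset⟩ := hE
  obtain ⟨hlam0, hlampos⟩ := hlam
  obtain ⟨hpn, hArank, hKpos, hψpos, hiff⟩ := hparam
  -- z i = 0 ↔ μ i = 0
  have hμz : ∀ i, z i = 0 ↔ μ i = 0 := by
    intro i
    rw [← Real.sign_eq_zero_iff (r := z i), ← hsign i, Real.sign_eq_zero_iff]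
  -- positivity of a
  have hapos : ∀ i, 0 < a i := by
    intro i
    rw [ha]
    by_cases hzi : z i = 0
    · simpa [hzi] using habar i hzi
    · simp only [hzi, if_false]
      have hμi : μ i ≠ 0 := fun h => hzi ((hμz i).2 h)
      rcases lt_or_gt_of_ne hμi with h | h
      · have h1 : Real.exp (μ i) - 1 < 0 := by
          have := Real.exp_lt_one_iff.2 h; linarith
        have hzneg : z i < 0 := by
          by_contra hge
          push_neg at hge
          rcases lt_or_eq_of_le hge with h2 | h2
          · have := hsign i
            rw [Real.sign_of_neg h, Real.sign_of_pos h2] at this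
            norm_num at this
          · exact hzi h2.symm
        exact div_pos_of_neg_of_neg hzneg h1
      · have h1 : 0 < Real.exp (μ i) - 1 := by
          have := Real.one_lt_exp_iff.2 h; linarith
        have hzpos : 0 < z i := by
          by_contra hge
          push_neg at hge
          rcases lt_or_eq_of_le hge with h2 | h2
          · have := hsign i
            rw [Real.sign_of_pos h, Real.sign_of_neg h2] at this
            norm_num at this
          · exact hzi h2
        exact div_pos hzpos h1
  have hbpos : ∀ i, 0 < b i := by
    intro i; rw [hb]; exact mul_pos (hapos i) (Real.exp_pos _)
  -- a ≠ b
  have hab : a ≠ b := by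
    obtain ⟨i, hi⟩ := Function.ne_iff.1 hμ0
    simp only [Pi.zero_apply] at hi
    intro h
    have h2 : a i = b i := congrFun h i
    rw [hb] at h2
    have h1 : Real.exp (μ i) = 1 := by
      have hai := (hapos i).ne'
      field_simp at h2
      tauto
    exact hi ((Real.exp_eq_one_iff _).1 h1)
  -- phi positive
  have hphia : ∀ j, 0 < phi Y a j := by
    intro j
    exact Finset.prod_pos fun i _ => pow_pos (hapos i) _
  have hkpos : ∀ j, 0 < k j := by
    intro j; rw [hk]; exact div_pos (hlampos j) (hphia j)
  -- k ⋆ φ(a) = Eλ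
  have hkphi : (fun j => k j * phi Y a j) = E.mulVec lam := by
    funext j
    rw [hk]
    exact div_mul_cancel₀ _ (hphia j).ne'
  -- Eλ ∈ ker S
  have hker : S.mulVec (E.mulVec lam) = 0 := by
    have : E.mulVec lam ∈ {v : Fin r → ℝ | S.mulVec v = 0 ∧ ∀ j, 0 ≤ v j} := by
      rw [hEset]; exact ⟨lam, hlam0, rfl⟩
    exact this.1
  have hka : (k, a) ∈ Vplus Y S := by
    refine ⟨hkpos, hapos, ?_⟩
    simpa [hkphi] using hker
  -- b - a = z
  have hba : b - a = z := by
    funext i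
    simp only [Pi.sub_apply, hb]
    by_cases hzi : z i = 0
    · rw [(hμz i).1 hzi, Real.exp_zero, mul_one, sub_self, hzi]
    · have hμi : μ i ≠ 0 := fun h => hzi ((hμz i).2 h)
      have hne : Real.exp (μ i) - 1 ≠ 0 := by
        intro h
        apply hμi
        have : Real.exp (μ i) = Real.exp 0 := by rw [Real.exp_zero]; linarith
        exact Real.exp_injective this
      have hai : a i = z i / (Real.exp (μ i) - 1) := by rw [ha]; simp [hzi]
      rw [hai]
      field_simp
  -- Z(b - a) = 0
  have hZrow : ∀ l, (Z l) ᵥ* S = 0 := by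
    intro l
    have : (fun i => Z i) l ∈ Submodule.span ℝ (Set.range (fun i => Z i)) :=
      Submodule.subset_span ⟨l, rfl⟩
    rw [hZ.2.2.2] at this
    simpa [Matrix.vecMulLinear_apply] using this
  obtain ⟨x, hx⟩ := hz
  have hZz : Z.mulVec z = 0 := by
    funext l
    rw [← hx]
    show Z l ⬝ᵥ S.mulVec x = 0
    rw [Matrix.dotProduct_mulVec, hZrow l]
    simp
  -- (k, b) ∈ Vplus via monomial parametrization
  obtain ⟨hK, ξ, hξpos, hxa⟩ := (hiff k a hkpos hapos).1 hka
  obtain ⟨c, hc⟩ := (Submodule.mem_span_range_iff_exists_fun ℝ).1 hμ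
  have hμeq : ∀ i, μ i = ∑ l, c l * (A l i : ℝ) := by
    intro i
    rw [← hc]
    simp
  have hkb : (k, b) ∈ Vplus Y S := by
    refine (hiff k b hkpos hbpos).2 ⟨hK, fun l => ξ l * Real.exp (c l), ?_, ?_⟩
    · intro l; exact mul_pos (hξpos l) (Real.exp_pos _)
    · funext i
      have hexp : Real.exp (μ i) = ∏ l, (Real.exp (c l)) ^ ((A l i : ℝ)) := by
        rw [hμeq i, Real.exp_sum]
        exact Finset.prod_congr rfl fun l _ => Real.exp_mul _ _
      have hvp : vecPow (fun l => ξ l * Real.exp (c l)) A i =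
          vecPow ξ A i * Real.exp (μ i) := by
        rw [hexp, vecPow, vecPow, ← Finset.prod_mul_distrib]
        exact Finset.prod_congr rfl fun l _ =>
          Real.mul_rpow (hξpos l).le (Real.exp_pos _).le
      rw [hb]
      simp only [hxa]
      rw [hvp]
      ring
  refine ⟨hapos, hbpos, hab, hkpos, hka, hkb, hba, ?_, ?_, k, hkpos, a, b, hab, hka, hkb, ?_⟩
  · rw [hba]; exact ⟨x, hx⟩
  · rw [hba]; exact hZz
  · have h0 : Z.mulVec b - Z.mulVec a = 0 := by
      rw [← Matrix.mulVec_sub, hba]; exact hZz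
    exact (sub_eq_zero.1 h0).symm
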